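/- arXiv:1904.05858 — 3 statements merged into one kernel-verified Lean document; each statement's English description precedes it below -/
import Mathlib

section
/- For any category C, the source functor s : Tw(C)^op → C from the opposite of the twisted arrow category (sending an arrow to its source) is homotopy terminal; that is, for every object j of C, the comma category (j ↓ s) has a contractible nerve. -/
/-!
STATEMENT 0: For any category `C`, the source functor `s : Tw(C)ᵒᵖ ⥤ C` from
the opposite of the twisted arrow category is homotopy terminal: for every
object `j` of `C`, the comma category `(j ↓ s)` has contractible nerve.
-/

open CategoryTheory Simplicial CategoryTheory.Limits

universe v u w

/-- The opposite of the twisted arrow category of `C`: objects are arrows of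
`C`; a morphism from `(a → b)` to `(c → d)` is a pair `u : a → c`, `v : d → b`
with `u ≫ (c → d) ≫ v = (a → b)`. -/
structure TwOp (C : Type u) [Category.{v} C] : Type max u v where
  left : C
  right : C
  hom : left ⟶ right

instance (C : Type u) [Category.{v} C] : Category (TwOp C) where
  Hom A B := { p : (A.left ⟶ B.left) × (B.right ⟶ A.right) //
    p.1 ≫ B.hom ≫ p.2 = A.hom }
  id A := ⟨(𝟙 _, 𝟙 _), by simp⟩
  comp f g := ⟨(f.val.1 ≫ g.val.1, g.val.2 ≫ f.val.2), by
    dsimp only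
    slice_lhs 2 4 => rw [g.property]
    simpa using f.property⟩
  id_comp f := by apply Subtype.ext; simp
  comp_id f := by apply Subtype.ext; simp
  assoc f g h := by apply Subtype.ext; simp

/-- The source functor `Tw(C)ᵒᵖ ⥤ C`, remembering the source of an arrow. -/
def TwOp.src (C : Type u) [Category.{v} C] : TwOp C ⥤ C where
  obj A := A.left
  map f := f.val.1

/-- The map of simplicial sets `X ⟶ Δ[1]` constant at the vertex `k`. -/
def vertexMap (X : SSet) (k : Fin 2) : X ⟶ Δ[1] where
  app m := TypeCat.ofHom (fun _ => SSet.stdSimplex.const 1 k m)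

/-- An elementary simplicial homotopy between two maps of simplicial sets. -/
def ElemHomotopy {X Y : SSet.{w}} (f g : X ⟶ Y) : Prop :=
  ∃ H : Limits.prod X Δ[1] ⟶ Y,
    Limits.prod.lift (𝟙 X) (vertexMap X 0) ≫ H = f ∧
    Limits.prod.lift (𝟙 X) (vertexMap X 1) ≫ H = g

/-- Simplicial homotopy: the equivalence relation generated by elementary
homotopies. -/
def SHomotopic {X Y : SSet} (f g : X ⟶ Y) : Prop :=
  Relation.EqvGen ElemHomotopy f g

/-- A simplicial set is contractible if it is simplicially homotopy equivalent
to the point `Δ[0]`. -/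
def SSetContractible (S : SSet) : Prop :=
  ∃ (p : S ⟶ Δ[0]) (s : Δ[0] ⟶ S),
    SHomotopic (p ≫ s) (𝟙 S) ∧ SHomotopic (s ≫ p) (𝟙 Δ[0])


/-! ### Auxiliary machinery -/

section HomotopyOfNatTrans

open MonoidalCategory CartesianMonoidalCategory

variable {D : Type u} [Category.{v} D]

/-- The map on nerves induced by an endofunctor. -/
def nmap (F : D ⥤ D) : nerve D ⟶ nerve D where
  app _ := TypeCat.ofHom fun σ => (σ : Fin _ ⥤ D) ⋙ F
  naturality _ _ _ := rfl

/-- The cylinder functor `Fin 2 × D ⥤ D` associated to a natural transformation. -/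
noncomputable def cylK {F G : D ⥤ D} (α : F ⟶ G) : Fin 2 × D ⥤ D :=
  Functor.uncurry.obj (ComposableArrows.mk₁ α : Fin 2 ⥤ D ⥤ D)

/-- The cylinder homotopy on nerves. -/
noncomputable def cylHom {F G : D ⥤ D} (α : F ⟶ G) : nerve D ⊗ Δ[1] ⟶ nerve D where
  app m := TypeCat.ofHom fun p => Functor.prod'
      ((((snd (nerve D) Δ[1]).app m p).down.toOrderHom).monotone.functor)
      (((fst (nerve D) Δ[1]).app m p : ComposableArrows D m.unop.len) : Fin _ ⥤ D) ⋙ cylK α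
  naturality m n f := by
    ext p
    have h1 : ((fst (nerve D) Δ[1]).app n ((nerve D ⊗ Δ[1]).map f p) :
          ComposableArrows D n.unop.len)
        = (nerve D).map f ((fst (nerve D) Δ[1]).app m p) :=
      ConcreteCategory.congr_hom ((fst (nerve D) Δ[1]).naturality f) p
    have h2 : (snd (nerve D) Δ[1]).app n ((nerve D ⊗ Δ[1]).map f p)
        = Δ[1].map f ((snd (nerve D) Δ[1]).app m p) :=
      ConcreteCategory.congr_hom ((snd (nerve D) Δ[1]).naturality f) p
    show Functor.prod' _ _ ⋙ cylK α = _
    erw [h1, h2]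
    rfl

lemma cyl_endpoint₀ {F G : D ⥤ D} (α : F ⟶ G) {A : Type*} [Category A]
    (c : A ⥤ Fin 2) (hc : ∀ a, c.obj a = 0) (σ σ0 : A ⥤ D) (hσ : σ = σ0) :
    Functor.prod' c σ ⋙ cylK α = σ0 ⋙ F := by
  subst hσ
  have hc' : c = (Functor.const A).obj (0 : Fin 2) :=
    CategoryTheory.Functor.ext hc (fun _ _ _ => Subsingleton.elim _ _)
  subst hc'
  refine CategoryTheory.Functor.ext (fun a => rfl) (fun a b g => ?_)
  show ((ComposableArrows.mk₁ α : Fin 2 ⥤ D ⥤ D).map (𝟙 (0 : Fin 2))).app (σ.obj a) ≫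
      F.map (σ.map g) = _
  rw [CategoryTheory.Functor.map_id]
  erw [Category.id_comp, eqToHom_refl, eqToHom_refl, Category.id_comp, Category.comp_id]
  rfl

lemma cyl_endpoint₁ {F G : D ⥤ D} (α : F ⟶ G) {A : Type*} [Category A]
    (c : A ⥤ Fin 2) (hc : ∀ a, c.obj a = 1) (σ σ0 : A ⥤ D) (hσ : σ = σ0) :
    Functor.prod' c σ ⋙ cylK α = σ0 ⋙ G := by
  subst hσ
  have hc' : c = (Functor.const A).obj (1 : Fin 2) :=
    CategoryTheory.Functor.ext hc (fun _ _ _ => Subsingleton.elim _ _)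
  subst hc'
  refine CategoryTheory.Functor.ext (fun a => rfl) (fun a b g => ?_)
  show ((ComposableArrows.mk₁ α : Fin 2 ⥤ D ⥤ D).map (𝟙 (1 : Fin 2))).app (σ.obj a) ≫
      G.map (σ.map g) = _
  rw [CategoryTheory.Functor.map_id]
  erw [Category.id_comp, eqToHom_refl, eqToHom_refl, Category.id_comp, Category.comp_id]
  rfl

lemma elemHomotopy_nmap {F G : D ⥤ D} (α : F ⟶ G) :
    ElemHomotopy (nmap F) (nmap G) := by
  refine ⟨(lift Limits.prod.fst Limits.prod.snd : _ ⟶ nerve D ⊗ Δ[1]) ≫ cylHom α, ?_, ?_⟩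
  · have key : Limits.prod.lift (𝟙 (nerve D)) (vertexMap (nerve D) 0) ≫
        (lift Limits.prod.fst Limits.prod.snd : _ ⟶ nerve D ⊗ Δ[1])
        = lift (𝟙 (nerve D)) (vertexMap (nerve D) 0) := by
      apply CartesianMonoidalCategory.hom_ext <;> simp
      · exact Limits.prod.lift_fst _ _
      · exact Limits.prod.lift_snd _ _
    rw [← Category.assoc, key]
    apply NatTrans.ext; funext m; ext σ
    have hf : ((fst (nerve D) Δ[1]).app m
        ((lift (𝟙 (nerve D)) (vertexMap (nerve D) 0)).app m σ) :
          ComposableArrows D m.unop.len) = σ := by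
      have := ConcreteCategory.congr_hom (congr_app
        (lift_fst (𝟙 (nerve D)) (vertexMap (nerve D) 0)) m) σ
      simpa only [NatTrans.comp_app, NatTrans.id_app, types_comp_apply,
        types_id_apply] using this
    have hg : (snd (nerve D) Δ[1]).app m
        ((lift (𝟙 (nerve D)) (vertexMap (nerve D) 0)).app m σ)
        = (vertexMap (nerve D) 0).app m σ := by
      have := ConcreteCategory.congr_hom (congr_app
        (lift_snd (𝟙 (nerve D)) (vertexMap (nerve D) 0)) m) σ
      simpa only [NatTrans.comp_app, types_comp_apply] using this
    show Functor.prod' _ _ ⋙ cylK α = (σ : Fin _ ⥤ D) ⋙ F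
    refine cyl_endpoint₀ α _ (fun a => ?_) _ _ hf
    show ((snd (nerve D) Δ[1]).app m
      ((lift (𝟙 (nerve D)) (vertexMap (nerve D) 0)).app m σ)).down.toOrderHom a = 0
    rw [hg]
    rfl
  · have key : Limits.prod.lift (𝟙 (nerve D)) (vertexMap (nerve D) 1) ≫
        (lift Limits.prod.fst Limits.prod.snd : _ ⟶ nerve D ⊗ Δ[1])
        = lift (𝟙 (nerve D)) (vertexMap (nerve D) 1) := by
      apply CartesianMonoidalCategory.hom_ext <;> simp
      · exact Limits.prod.lift_fst _ _
      · exact Limits.prod.lift_snd _ _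
    rw [← Category.assoc, key]
    apply NatTrans.ext; funext m; ext σ
    have hf : ((fst (nerve D) Δ[1]).app m
        ((lift (𝟙 (nerve D)) (vertexMap (nerve D) 1)).app m σ) :
          ComposableArrows D m.unop.len) = σ := by
      have := ConcreteCategory.congr_hom (congr_app
        (lift_fst (𝟙 (nerve D)) (vertexMap (nerve D) 1)) m) σ
      simpa only [NatTrans.comp_app, NatTrans.id_app, types_comp_apply,
        types_id_apply] using this
    have hg : (snd (nerve D) Δ[1]).app m
        ((lift (𝟙 (nerve D)) (vertexMap (nerve D) 1)).app m σ)
        = (vertexMap (nerve D) 1).app m σ := by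
      have := ConcreteCategory.congr_hom (congr_app
        (lift_snd (𝟙 (nerve D)) (vertexMap (nerve D) 1)) m) σ
      simpa only [NatTrans.comp_app, types_comp_apply] using this
    show Functor.prod' _ _ ⋙ cylK α = (σ : Fin _ ⥤ D) ⋙ G
    refine cyl_endpoint₁ α _ (fun a => ?_) _ _ hf
    show ((snd (nerve D) Δ[1]).app m
      ((lift (𝟙 (nerve D)) (vertexMap (nerve D) 1)).app m σ)).down.toOrderHom a = 1
    rw [hg]
    rfl

end HomotopyOfNatTrans

section Comma

variable {C' : Type u} [Category.{v} C'] {A B : TwOp C'}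

@[ext] lemma TwOp.hom_ext (f g : A ⟶ B) (h1 : f.val.1 = g.val.1)
    (h2 : f.val.2 = g.val.2) : f = g := by
  apply Subtype.ext; apply Prod.ext h1 h2

@[simp] lemma TwOp.comp_val₁ {Z : TwOp C'} (f : A ⟶ B) (g : B ⟶ Z) :
    (f ≫ g).val.1 = f.val.1 ≫ g.val.1 := rfl

@[simp] lemma TwOp.comp_val₂ {Z : TwOp C'} (f : A ⟶ B) (g : B ⟶ Z) :
    (f ≫ g).val.2 = g.val.2 ≫ f.val.2 := rfl

@[simp] lemma TwOp.id_val₁ : (𝟙 A : A ⟶ A).val.1 = 𝟙 A.left := rfl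

@[simp] lemma TwOp.id_val₂ : (𝟙 A : A ⟶ A).val.2 = 𝟙 A.right := rfl

@[simp] lemma TwOp.src_map (f : A ⟶ B) : (TwOp.src C').map f = f.val.1 := rfl

variable (C : Type u) [Category.{v} C] (j : C)

/-- Abbreviation for the comma category `(j ↓ s)`. -/
abbrev CommaCat := StructuredArrow j (TwOp.src C)

/-- The base object of the contraction. -/
def E0 : CommaCat C j := StructuredArrow.mk (Y := (⟨j, j, 𝟙 j⟩ : TwOp C)) (𝟙 j)

@[simp] lemma E0_right : (E0 C j).right = (⟨j, j, 𝟙 j⟩ : TwOp C) := rfl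
@[simp] lemma E0_hom : (E0 C j).hom = 𝟙 j := rfl

/-- The intermediate endofunctor. -/
def Rf : CommaCat C j ⥤ CommaCat C j where
  obj x := StructuredArrow.mk
    (Y := (⟨j, x.right.right, x.hom ≫ x.right.hom⟩ : TwOp C)) (𝟙 j)
  map {x y} f := StructuredArrow.homMk
    (⟨(𝟙 j, f.right.val.2), by
      have hw : x.hom ≫ f.right.val.1 = y.hom := StructuredArrow.w f
      have hp : f.right.val.1 ≫ y.right.hom ≫ f.right.val.2 = x.right.hom :=
        f.right.property
      dsimp only
      erw [Category.id_comp, Category.assoc, ← hw, Category.assoc, hp]⟩ :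
        ({ left := j, right := x.right.right, hom := x.hom ≫ x.right.hom} : TwOp C) ⟶
        ({ left := j, right := y.right.right, hom := y.hom ≫ y.right.hom} : TwOp C))
    (by simp [TwOp.src])
  map_id x := by
    apply StructuredArrow.hom_ext
    apply Subtype.ext
    rfl
  map_comp f g := by
    apply StructuredArrow.hom_ext
    apply TwOp.hom_ext <;> simp
    exact (Category.comp_id _).symm

@[simp] lemma Rf_obj_right (x : CommaCat C j) :
    ((Rf C j).obj x).right =
      (⟨j, x.right.right, x.hom ≫ x.right.hom⟩ : TwOp C) := rfl
@[simp] lemma Rf_obj_hom (x : CommaCat C j) : ((Rf C j).obj x).hom = 𝟙 j := rfl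
@[simp] lemma Rf_map_right₁ {x y : CommaCat C j} (f : x ⟶ y) :
    (((Rf C j).map f).right).val.1 = 𝟙 j := rfl
@[simp] lemma Rf_map_right₂ {x y : CommaCat C j} (f : x ⟶ y) :
    (((Rf C j).map f).right).val.2 = f.right.val.2 := rfl

/-- The natural transformation `Rf ⟶ 𝟭`. -/
def epsNat : Rf C j ⟶ 𝟭 (CommaCat C j) where
  app x := StructuredArrow.homMk
    (⟨(x.hom, 𝟙 x.right.right), by simp [TwOp.src]⟩ :
      ((Rf C j).obj x).right ⟶ x.right)
    (by simp [TwOp.src])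
  naturality x y f := by
    have hw : x.hom ≫ f.right.val.1 = y.hom := StructuredArrow.w f
    apply StructuredArrow.hom_ext
    apply TwOp.hom_ext
    · exact (Category.id_comp y.hom).trans hw.symm
    · exact (Category.id_comp f.right.val.2).trans (Category.comp_id f.right.val.2).symm

/-- The natural transformation `Rf ⟶ const E0`. -/
def etaNat : Rf C j ⟶ (Functor.const (CommaCat C j)).obj (E0 C j) where
  app x := StructuredArrow.homMk
    (⟨(𝟙 j, x.hom ≫ x.right.hom), by simp⟩ :
      ((Rf C j).obj x).right ⟶ (E0 C j).right)
    (by simp [TwOp.src])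
  naturality x y f := by
    have hw : x.hom ≫ f.right.val.1 = y.hom := StructuredArrow.w f
    have hp : f.right.val.1 ≫ y.right.hom ≫ f.right.val.2 = x.right.hom :=
      f.right.property
    apply StructuredArrow.hom_ext
    apply TwOp.hom_ext
    · rfl
    · show (y.hom ≫ y.right.hom) ≫ f.right.val.2 = 𝟙 j ≫ (x.hom ≫ x.right.hom)
      erw [Category.id_comp, Category.assoc, ← hw, Category.assoc, hp]

instance deltaZeroSubsingleton (m : SimplexCategoryᵒᵖ) :
    Subsingleton (Δ[0].obj m) := by
  constructor
  intro a b
  apply (SSet.stdSimplex.objEquiv).injective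
  apply SimplexCategory.Hom.ext
  apply OrderHom.ext
  funext i
  apply Subsingleton.elim (α := Fin 1)

/-- Projection to the point. -/
def pMap : nerve (CommaCat C j) ⟶ Δ[0] where
  app m := TypeCat.ofHom fun _ => SSet.stdSimplex.const 0 0 m
  naturality _ _ _ := by
    ext
    apply Subsingleton.elim

/-- Inclusion of the base point. -/
def sMap : Δ[0] ⟶ nerve (CommaCat C j) where
  app m := TypeCat.ofHom fun _ => (Functor.const (Fin (m.unop.len + 1))).obj (E0 C j)
  naturality _ _ _ := rfl

/-- The source functor is homotopy terminal: every comma category `(j ↓ s)`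
has contractible nerve. -/
theorem source_functor_homotopy_terminal (C : Type u) [Category.{v} C] (j : C) :
    SSetContractible (nerve (StructuredArrow j (TwOp.src C))) := by
  refine ⟨pMap C j, sMap C j, ?_, ?_⟩
  · have h1 : ElemHomotopy (nmap (Rf C j)) (nmap (𝟭 (CommaCat C j))) :=
      elemHomotopy_nmap (epsNat C j)
    have h2 : ElemHomotopy (nmap (Rf C j))
        (nmap ((Functor.const (CommaCat C j)).obj (E0 C j))) :=
      elemHomotopy_nmap (etaNat C j)
    have e1 : nmap (𝟭 (CommaCat C j)) = 𝟙 (nerve (CommaCat C j)) := rfl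
    have e2 : nmap ((Functor.const (CommaCat C j)).obj (E0 C j))
        = pMap C j ≫ sMap C j := rfl
    rw [e1] at h1
    rw [e2] at h2
    exact Relation.EqvGen.trans _ _ _
      (Relation.EqvGen.symm _ _ (Relation.EqvGen.rel _ _ h2))
      (Relation.EqvGen.rel _ _ h1)
  · have : sMap C j ≫ pMap C j = 𝟙 Δ[0] := by
      apply NatTrans.ext; funext m; ext x
      apply Subsingleton.elim
    rw [this]
    exact Relation.EqvGen.refl _

end Comma
end

section
/- Let G be a group, C and D categories with G-actions where the action on C and on C' is trivial, and suppose given G-equivariant functors I : C → D, I' : C' → D', F₁ : C → C', F₂ : D → D', together with a G-fixed natural isomorphism η : I' ∘ F₁ ≅ F₂ ∘ I. Then there is a G-equivariant functor D_I → D' which restricts to I' ∘ F₁ on the full subcategory on ob(C) and to F₂ on the full subcategory on ob(D), defined on cross morphisms by conjugating with η; moreover the square with the equivariant equivalence D_I → D and the functor C → D_I commutes strictly. -/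
/-!
STATEMENT 6: Given `G`-equivariant functors `I : C ⥤ D`, `I' : C' ⥤ D'`,
`F₁ : C ⥤ C'`, `F₂ : D ⥤ D'` (where the `G`-actions on `C` and `C'` are
trivial) and a `G`-fixed natural isomorphism `η : I' ∘ F₁ ≅ F₂ ∘ I`, there is
a `G`-equivariant functor `D_I ⥤ D'` restricting to `I' ∘ F₁` on `ob C` and
to `F₂` on `ob D`, defined on cross morphisms by conjugating with `η`;
moreover the square formed with the equivalence `D_I ⥤ D` and the functor
`C ⥤ D_I` commutes strictly.
-/

open CategoryTheory

universe w v₁ u₁ v₂ u₂ v₃ u₃ v₄ u₄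

variable {C : Type u₁} [Category.{v₁} C] {D : Type u₂} [Category.{v₂} D]
variable {C' : Type u₃} [Category.{v₃} C'] {D' : Type u₄} [Category.{v₄} D']

/-- The objects of the mapping-cylinder category `D_I`. -/
def DI (_ : C ⥤ D) : Type max u₁ u₂ := Sum C D

/-- The underlying object in `D` of an object of `D_I`. -/
def DI.toD (I : C ⥤ D) : DI I → D
  | Sum.inl c => I.obj c
  | Sum.inr d => d

/-- `D_I` is a category, with hom-sets computed in `D`. -/
instance DI.category (I : C ⥤ D) : Category (DI I) where
  Hom a b := DI.toD I a ⟶ DI.toD I b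
  id a := 𝟙 (DI.toD I a)
  comp f g := f ≫ g

/-- The canonical comparison functor `D_I ⥤ D`. -/
def DI.cmp (I : C ⥤ D) : DI I ⥤ D where
  obj := DI.toD I
  map f := f

/-- The canonical functor `C ⥤ D_I` (the inclusion of the objects of `C`). -/
def DI.inlF (I : C ⥤ D) : C ⥤ DI I where
  obj c := Sum.inl c
  map f := I.map f
  map_id := by intros; simp; rfl
  map_comp := by intros; simp; rfl

/-- The canonical functor `D ⥤ D_I` (the inclusion of the objects of `D`). -/
def DI.inrF (I : C ⥤ D) : D ⥤ DI I where
  obj d := Sum.inr d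
  map f := f

section Aux

/-- A HEq of morphisms over equal objects gives an eqToHom conjugation. -/
lemma eq_conj_of_heq {E : Type*} [Category E] {a b a' b' : E}
    (ha : a = a') (hb : b = b') {f : a ⟶ b} {f' : a' ⟶ b'} (h : HEq f f') :
    f' = eqToHom ha.symm ≫ f ≫ eqToHom hb := by
  subst ha; subst hb; simp [eq_of_heq h]

/-- `eqToHom` in `DI I` is `eqToHom` in `D`. -/
lemma DI.eqToHom_eq (I : C ⥤ D) {a b : DI I} (h : a = b) :
    (eqToHom h : a ⟶ b) = (eqToHom (congrArg (DI.toD I) h) : DI.toD I a ⟶ DI.toD I b) := by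
  subst h; rfl

/-- The glued functor `D_I ⥤ D'`. -/
def DI.glue (I : C ⥤ D) (I' : C' ⥤ D') (F₁ : C ⥤ C') (F₂ : D ⥤ D')
    (η : F₁ ⋙ I' ≅ I ⋙ F₂) : DI I ⥤ D' where
  obj x := match x with
    | Sum.inl c => I'.obj (F₁.obj c)
    | Sum.inr d => F₂.obj d
  map {X Y} f := match X, Y, f with
    | Sum.inl c, Sum.inl c', f => η.hom.app c ≫ F₂.map f ≫ η.inv.app c'
    | Sum.inl c, Sum.inr _, f => η.hom.app c ≫ F₂.map f
    | Sum.inr _, Sum.inl c', f => F₂.map f ≫ η.inv.app c'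
    | Sum.inr _, Sum.inr _, f => F₂.map f
  map_id X := by
    cases X with
    | inl c =>
        show η.hom.app c ≫ F₂.map (𝟙 (I.obj c)) ≫ η.inv.app c = _
        simp
    | inr d =>
        show F₂.map (𝟙 d) = _
        simp
  map_comp {X Y Z} f g := by
    rcases X with c | d <;> rcases Y with c' | d' <;> rcases Z with c'' | d'' <;>
      · show _ = _
        simp [DI.category]
        erw [F₂.map_comp]
        all_goals (unfold DI.toD at *; simp)

/-- Object part of the action on `D_I`. -/
def DI.actObj (I : C ⥤ D) (ρ : D ⥤ D) : DI I → DI I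
  | Sum.inl c => Sum.inl c
  | Sum.inr d => Sum.inr (ρ.obj d)

lemma DI.toD_actObj (I : C ⥤ D) (ρ : D ⥤ D) (h : I ⋙ ρ = I) (x : DI I) :
    DI.toD I (DI.actObj I ρ x) = ρ.obj (DI.toD I x) := by
  cases x with
  | inl c => exact (Functor.congr_obj h c).symm
  | inr d => rfl

/-- The action of a single group element on `D_I`, built from an action on `D`. -/
def DI.act (I : C ⥤ D) (ρ : D ⥤ D) (h : I ⋙ ρ = I) : DI I ⥤ DI I where
  obj := DI.actObj I ρ
  map {X Y} f :=
    (eqToHom (DI.toD_actObj I ρ h X) ≫ ρ.map f ≫ eqToHom (DI.toD_actObj I ρ h Y).symm :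
      DI.toD I (DI.actObj I ρ X) ⟶ DI.toD I (DI.actObj I ρ Y))
  map_id X := by
    show _ ≫ ρ.map (𝟙 (DI.toD I X)) ≫ _ = 𝟙 (DI.toD I (DI.actObj I ρ X))
    simp
  map_comp {X Y Z} f g := by
    show _ ≫ ρ.map (f ≫ g) ≫ _ =
      (_ ≫ ρ.map f ≫ _ : DI.toD I (DI.actObj I ρ X) ⟶ DI.toD I (DI.actObj I ρ Y)) ≫
        (_ ≫ ρ.map g ≫ _)
    simp

lemma sandwich_eq {E : Type*} [Category E] {A B P Q X Y : E} (m : B ⟶ P)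
    (h1 : X = B) (h2 : P = Y) (p1 : X = A) (p2 : A = B) (q2 : P = Q) (q1 : Q = Y) :
    eqToHom h1 ≫ m ≫ eqToHom h2 = eqToHom p1 ≫ (eqToHom p2 ≫ m ≫ eqToHom q2) ≫ eqToHom q1 := by
  subst p1 p2 q2 q1; simp

lemma DI.comp_def (I : C ⥤ D) {a b c : DI I} (f : a ⟶ b) (g : b ⟶ c) :
    f ≫ g = ((f : DI.toD I a ⟶ DI.toD I b) ≫ (g : DI.toD I b ⟶ DI.toD I c)) := rfl

lemma DI.cmp_map (I : C ⥤ D) {a b : DI I} (f : a ⟶ b) :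
    (DI.cmp I).map f = (f : DI.toD I a ⟶ DI.toD I b) := rfl

lemma DI.act_map (I : C ⥤ D) (ρ : D ⥤ D) (h : I ⋙ ρ = I) {X Y : DI I} (f : X ⟶ Y) :
    (DI.act I ρ h).map f =
      (eqToHom (DI.toD_actObj I ρ h X) ≫ ρ.map f ≫ eqToHom (DI.toD_actObj I ρ h Y).symm :
        DI.toD I (DI.actObj I ρ X) ⟶ DI.toD I (DI.actObj I ρ Y)) := rfl

section GlueLemmas

variable (I : C ⥤ D) (I' : C' ⥤ D') (F₁ : C ⥤ C') (F₂ : D ⥤ D') (η : F₁ ⋙ I' ≅ I ⋙ F₂)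

lemma DI.glue_obj_inl (c : C) : (DI.glue I I' F₁ F₂ η).obj (Sum.inl c) = I'.obj (F₁.obj c) := rfl

lemma DI.glue_obj_inr (d : D) : (DI.glue I I' F₁ F₂ η).obj (Sum.inr d) = F₂.obj d := rfl

lemma DI.glue_map_inl_inl (c c' : C) (f : I.obj c ⟶ I.obj c') :
    (DI.glue I I' F₁ F₂ η).map (X := Sum.inl c) (Y := Sum.inl c') f
      = η.hom.app c ≫ F₂.map f ≫ η.inv.app c' := rfl

lemma DI.glue_map_inl_inr (c : C) (d : D) (f : I.obj c ⟶ d) :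
    (DI.glue I I' F₁ F₂ η).map (X := Sum.inl c) (Y := Sum.inr d) f
      = η.hom.app c ≫ F₂.map f := rfl

lemma DI.glue_map_inr_inl (d : D) (c' : C) (f : d ⟶ I.obj c') :
    (DI.glue I I' F₁ F₂ η).map (X := Sum.inr d) (Y := Sum.inl c') f
      = F₂.map f ≫ η.inv.app c' := rfl

lemma DI.glue_map_inr_inr (d d' : D) (f : d ⟶ d') :
    (DI.glue I I' F₁ F₂ η).map (X := Sum.inr d) (Y := Sum.inr d') f
      = F₂.map f := rfl

end GlueLemmas

end Aux

theorem glued_functor_on_DI_equivariant_and_strict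
    {G : Type w} [Group G]
    (ρD : G → D ⥤ D) (ρD' : G → D' ⥤ D')
    (hDone : ρD 1 = 𝟭 D) (hDmul : ∀ g h : G, ρD (g * h) = ρD h ⋙ ρD g)
    (hD'one : ρD' 1 = 𝟭 D') (hD'mul : ∀ g h : G, ρD' (g * h) = ρD' h ⋙ ρD' g)
    (I : C ⥤ D) (I' : C' ⥤ D') (F₁ : C ⥤ C') (F₂ : D ⥤ D')
    -- `I` and `I'` are equivariant (trivial actions on `C`, `C'`)
    (hI : ∀ g : G, I ⋙ ρD g = I) (hI' : ∀ g : G, I' ⋙ ρD' g = I')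
    -- `F₂` is equivariant
    (hF₂ : ∀ g : G, ρD g ⋙ F₂ = F₂ ⋙ ρD' g)
    -- the natural isomorphism `η : I' ∘ F₁ ≅ F₂ ∘ I`, which is `G`-fixed
    (η : F₁ ⋙ I' ≅ I ⋙ F₂)
    (hη : ∀ (g : G) (c : C), HEq ((ρD' g).map (η.hom.app c)) (η.hom.app c))
    -- `G` acts on `D_I` via its actions on `C` (trivially) and `D`
    (A : G → DI I ⥤ DI I)
    (hA₁ : ∀ (g : G) (c : C), (A g).obj (Sum.inl c) = Sum.inl c)
    (hA₂ : ∀ (g : G) (d : D), (A g).obj (Sum.inr d) = Sum.inr ((ρD g).obj d))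
    (hA₃ : ∀ g : G, A g ⋙ DI.cmp I = DI.cmp I ⋙ ρD g) :
    ∃ Θ : DI I ⥤ D',
      -- `Θ` is `G`-equivariant
      (∀ g : G, A g ⋙ Θ = Θ ⋙ ρD' g) ∧
      -- `Θ` restricts to `I' ∘ F₁` on the objects of `C`
      DI.inlF I ⋙ Θ = F₁ ⋙ I' ∧
      -- `Θ` restricts to `F₂` on the objects of `D`
      DI.inrF I ⋙ Θ = F₂ ∧
      -- on cross morphisms, `Θ` is given by conjugating with `η`
      (∀ (c : C) (d : D) (f : I.obj c ⟶ d),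
        HEq (Θ.map (X := Sum.inl c) (Y := Sum.inr d) f)
          (η.hom.app c ≫ F₂.map f)) ∧
      -- the square with the equivalence `D_I ⥤ D` and `C ⥤ D_I` commutes
      -- strictly
      DI.inlF I ⋙ DI.cmp I = I := by
  -- object-level consequences of the equivariance hypotheses
  have hI'o : ∀ (g : G) (x : C'), (ρD' g).obj (I'.obj x) = I'.obj x :=
    fun g x => Functor.congr_obj (hI' g) x
  have hIo : ∀ (g : G) (c : C), (ρD g).obj (I.obj c) = I.obj c :=
    fun g c => Functor.congr_obj (hI g) c
  have hF₂o : ∀ (g : G) (d : D), F₂.obj ((ρD g).obj d) = (ρD' g).obj (F₂.obj d) :=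
    fun g d => Functor.congr_obj (hF₂ g) d
  have hb : ∀ (g : G) (c : C), F₂.obj (I.obj c) = (ρD' g).obj (F₂.obj (I.obj c)) := by
    intro g c; rw [← hF₂o g (I.obj c), hIo g c]
  -- η is fixed, in `eqToHom` form
  have hηh : ∀ (g : G) (c : C), (ρD' g).map (η.hom.app c)
      = eqToHom (hI'o g (F₁.obj c)) ≫ η.hom.app c ≫ eqToHom (hb g c) :=
    fun g c => by
      have := eq_conj_of_heq (f' := (ρD' g).map (η.hom.app c)) (f := η.hom.app c)
        (hI'o g (F₁.obj c)).symm (hb g c) (hη g c).symm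
      simpa using this
  have hηi : ∀ (g : G) (c : C), (ρD' g).map (η.inv.app c)
      = eqToHom (hb g c).symm ≫ η.inv.app c ≫ eqToHom (hI'o g (F₁.obj c)).symm := by
    intro g c
    rw [← cancel_epi ((ρD' g).map (η.hom.app c))]
    conv_lhs => rw [← Functor.map_comp]
    rw [hηh g c]
    simp
  -- identify `A g` with the explicit action
  have hA : ∀ g : G, A g = DI.act I (ρD g) (hI g) := by
    intro g
    refine CategoryTheory.Functor.ext (fun X => ?_) (fun X Y f => ?_)
    · cases X with
      | inl c => exact (hA₁ g c).trans rfl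
      | inr d => exact (hA₂ g d).trans rfl
    · have hc := Functor.congr_hom (hA₃ g) f
      simp only [Functor.comp_map, DI.cmp_map] at hc
      refine hc.trans ?_
      rw [DI.act_map, DI.comp_def, DI.comp_def, DI.eqToHom_eq, DI.eqToHom_eq]
      exact sandwich_eq _ _ _ _ _ _ _
  refine ⟨DI.glue I I' F₁ F₂ η, ?_, ?_, ?_, ?_, ?_⟩
  · -- equivariance
    intro g
    rw [hA g]
    refine CategoryTheory.Functor.ext (fun X => ?_) (fun X Y f => ?_)
    · cases X with
      | inl c => exact (hI'o g (F₁.obj c)).symm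
      | inr d => exact hF₂o g d
    · have hF₂c : ∀ {d₁ d₂ : D} (u : d₁ ⟶ d₂), F₂.map ((ρD g).map u)
          = eqToHom (hF₂o g d₁) ≫ (ρD' g).map (F₂.map u) ≫ eqToHom (hF₂o g d₂).symm := by
        intro d₁ d₂ u
        have := Functor.congr_hom (hF₂ g) u
        simpa using this
      rcases X with c | d <;> rcases Y with c' | d'
      · change I.obj c ⟶ I.obj c' at f
        show η.hom.app c ≫ F₂.map (eqToHom (hIo g c).symm ≫ (ρD g).map (f : I.obj c ⟶ I.obj c') ≫
            eqToHom (hIo g c')) ≫ η.inv.app c' =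
          eqToHom (hI'o g (F₁.obj c)).symm ≫ (ρD' g).map (η.hom.app c ≫ F₂.map (f : I.obj c ⟶ I.obj c') ≫
            η.inv.app c') ≫ eqToHom (hI'o g (F₁.obj c'))
        simp only [Functor.comp_map, DI.act_map, DI.actObj, DI.glue_map_inl_inl,
          DI.glue_map_inl_inr, DI.glue_map_inr_inl, DI.glue_map_inr_inr,
          Functor.map_comp, eqToHom_map, hηh, hηi, hF₂c, Category.assoc, eqToHom_trans,
          eqToHom_trans_assoc]
        simp [eqToHom_map]
      · change I.obj c ⟶ d' at f
        show η.hom.app c ≫ F₂.map (eqToHom (hIo g c).symm ≫ (ρD g).map (f : I.obj c ⟶ d') ≫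
            eqToHom (rfl : (ρD g).obj d' = _)) =
          eqToHom (hI'o g (F₁.obj c)).symm ≫ (ρD' g).map (η.hom.app c ≫ F₂.map (f : I.obj c ⟶ d')) ≫
            eqToHom (hF₂o g d').symm
        simp only [Functor.comp_map, DI.act_map, DI.actObj, DI.glue_map_inl_inl,
          DI.glue_map_inl_inr, DI.glue_map_inr_inl, DI.glue_map_inr_inr,
          Functor.map_comp, eqToHom_map, hηh, hηi, hF₂c, Category.assoc, eqToHom_trans,
          eqToHom_trans_assoc]
        simp [eqToHom_map]
      · change d ⟶ I.obj c' at f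
        show F₂.map (eqToHom (rfl : (ρD g).obj d = _) ≫ (ρD g).map (f : d ⟶ I.obj c') ≫
            eqToHom (hIo g c')) ≫ η.inv.app c' =
          eqToHom (hF₂o g d) ≫ (ρD' g).map (F₂.map (f : d ⟶ I.obj c') ≫ η.inv.app c') ≫
            eqToHom (hI'o g (F₁.obj c'))
        simp only [Functor.comp_map, DI.act_map, DI.actObj, DI.glue_map_inl_inl,
          DI.glue_map_inl_inr, DI.glue_map_inr_inl, DI.glue_map_inr_inr,
          Functor.map_comp, eqToHom_map, hηh, hηi, hF₂c, Category.assoc, eqToHom_trans,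
          eqToHom_trans_assoc]
        simp [eqToHom_map]
      · change d ⟶ d' at f
        show F₂.map (eqToHom (rfl : (ρD g).obj d = _) ≫ (ρD g).map (f : d ⟶ d') ≫
            eqToHom (rfl : (ρD g).obj d' = _)) =
          eqToHom (hF₂o g d) ≫ (ρD' g).map (F₂.map (f : d ⟶ d')) ≫ eqToHom (hF₂o g d').symm
        simp only [Functor.comp_map, DI.act_map, DI.actObj, DI.glue_map_inl_inl,
          DI.glue_map_inl_inr, DI.glue_map_inr_inl, DI.glue_map_inr_inr,
          Functor.map_comp, eqToHom_map, hηh, hηi, hF₂c, Category.assoc, eqToHom_trans,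
          eqToHom_trans_assoc]
  · -- restriction to `C`
    refine CategoryTheory.Functor.ext (fun c => rfl) (fun c c' f => ?_)
    show (DI.glue I I' F₁ F₂ η).map (X := Sum.inl c) (Y := Sum.inl c') (I.map f) = _
    rw [DI.glue_map_inl_inl]
    have := η.hom.naturality f
    simp only [Functor.comp_map] at this
    rw [← Category.assoc, ← this, Category.assoc, Iso.hom_inv_id_app, Category.comp_id]
    simp
    erw [eqToHom_refl, eqToHom_refl, Category.id_comp, Category.comp_id]
  · -- restriction to `D`
    refine CategoryTheory.Functor.ext (fun d => rfl) (fun d d' f => ?_)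
    show (DI.glue I I' F₁ F₂ η).map (X := Sum.inr d) (Y := Sum.inr d') f = _
    rw [DI.glue_map_inr_inr]
    simp
    erw [eqToHom_refl, eqToHom_refl, Category.id_comp, Category.comp_id]
  · -- cross morphisms
    intro c d f
    exact heq_of_eq (DI.glue_map_inl_inr I I' F₁ F₂ η c d f)
  · -- strictness of the square
    rfl
end

section
/- Let G be a group acting on a category D, and EG the chaotic category on G with G acting by left translation. For any pseudoequivariant functor Φ : C → D from a category C with trivial G-action, the square relating the induced strictly equivariant functor Φ~ : Fun(EG,C) → Fun(EG,D) and Φ commutes: precomposing Φ~ with the equivalence C ≃ Fun(EG,C) (constant-functor embedding, noting the G-action on C is trivial so this lands correctly) and postcomposing with evaluation at the identity element e ∈ EG gives a functor naturally isomorphic to Φ. In particular Φ~ is an equivalence of categories whenever Φ is. -/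
/-!
STATEMENT 7: For a pseudoequivariant functor `Φ : C ⥤ D` from a category with
trivial `G`-action to a `G`-category `D`, the induced strictly equivariant
functor `Φ~ : Fun(EG, C) ⥤ Fun(EG, D)` is compatible with `Φ`: precomposing
with the constant-functor embedding `C ⥤ Fun(EG, C)` and postcomposing with
evaluation at `e` gives a functor naturally isomorphic to `Φ`.  In particular
`Φ~` is an equivalence of categories whenever `Φ` is.
-/

open CategoryTheory

universe w v₁ u₁ v₂ u₂

/-- The chaotic (indiscrete) category on the elements of `G`. -/
structure Chaotic (G : Type w) where
  el : G

instance (G : Type w) : Category (Chaotic G) where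
  Hom _ _ := PUnit
  id _ := PUnit.unit
  comp _ _ := PUnit.unit

/-- Left translation by `g` on the chaotic category. -/
def Chaotic.trans {G : Type w} [Group G] (g : G) : Chaotic G ⥤ Chaotic G where
  obj x := ⟨g * x.el⟩
  map _ := PUnit.unit

variable {G : Type w} [Group G]
variable {C : Type u₁} [Category.{v₁} C] {D : Type u₂} [Category.{v₂} D]

/-- The conjugation action of `g` on `Fun(EG, D)` for a `G`-category `D`:
`(g·Φ)(x) = g·Φ(g⁻¹x)`. -/
def conjAction (ρ : G → D ⥤ D) (g : G) :
    (Chaotic G ⥤ D) ⥤ (Chaotic G ⥤ D) :=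
  (Functor.whiskeringLeft (Chaotic G) (Chaotic G) D).obj (Chaotic.trans g⁻¹) ⋙
    (Functor.whiskeringRight (Chaotic G) D D).obj (ρ g)

/-- The conjugation action of `g` on `Fun(EG, C)` when the action on `C` is
trivial: `(g·Φ)(x) = Φ(g⁻¹x)`. -/
def conjTrivial (C : Type u₁) [Category.{v₁} C] (g : G) :
    (Chaotic G ⥤ C) ⥤ (Chaotic G ⥤ C) :=
  (Functor.whiskeringLeft (Chaotic G) (Chaotic G) C).obj (Chaotic.trans g⁻¹)

set_option linter.unusedSectionVars false

/-- The unique morphism between any two objects of the chaotic category. -/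
def Chaotic.hom {G : Type w} (x y : Chaotic G) : x ⟶ y := PUnit.unit

lemma Chaotic.hom_eq {G : Type w} {x y : Chaotic G} (f : x ⟶ y) : f = Chaotic.hom x y := rfl

lemma transNat (ρ : G → D ⥤ D) (Φ : C ⥤ D) (θ : ∀ g : G, Φ ≅ Φ ⋙ ρ g)
    (a b : G) {c c' : C} (m : c ⟶ c') :
    (ρ a).map (Φ.map m) ≫ (θ a).inv.app c' ≫ (θ b).hom.app c' =
      (θ a).inv.app c ≫ (θ b).hom.app c ≫ (ρ b).map (Φ.map m) := by
  have h1 := (θ b).hom.naturality m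
  have h2 := (θ a).inv.naturality m
  simp only [Functor.comp_map] at h1 h2
  rw [← Category.assoc, h2, Category.assoc, h1]

lemma thetaHom_congr (ρ : G → D ⥤ D) (Φ : C ⥤ D) (θ : ∀ g : G, Φ ≅ Φ ⋙ ρ g)
    {a b : G} (h : a = b) (c : C) :
    (θ a).hom.app c = (θ b).hom.app c ≫ eqToHom (by rw [h]) := by
  subst h; simp

lemma thetaInv_congr (ρ : G → D ⥤ D) (Φ : C ⥤ D) (θ : ∀ g : G, Φ ≅ Φ ⋙ ρ g)
    {a b : G} (h : a = b) (c : C) :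
    (θ a).inv.app c = eqToHom (by rw [h]) ≫ (θ b).inv.app c := by
  subst h; simp

/-- The induced functor `Φ~` on functor categories. -/
def PhiT (ρ : G → D ⥤ D) (Φ : C ⥤ D) (θ : ∀ g : G, Φ ≅ Φ ⋙ ρ g) :
    (Chaotic G ⥤ C) ⥤ (Chaotic G ⥤ D) where
  obj F :=
    { obj := fun x => (ρ x.el).obj (Φ.obj (F.obj x))
      map := fun {x y} _ =>
        (ρ x.el).map (Φ.map (F.map (Chaotic.hom x y))) ≫ (θ x.el).inv.app (F.obj y) ≫
          (θ y.el).hom.app (F.obj y)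
      map_id := by
        intro x
        rw [show Chaotic.hom x x = 𝟙 x from rfl]
        simp
      map_comp := by
        intro x y z f g
        rw [show Chaotic.hom x z = Chaotic.hom x y ≫ Chaotic.hom y z from rfl]
        simp only [Functor.map_comp, Category.assoc]
        have e := transNat ρ Φ θ x.el y.el (F.map (Chaotic.hom y z))
        rw [← reassoc_of% e]
        simp }
  map {F F'} α :=
    { app := fun x => (ρ x.el).map (Φ.map (α.app x))
      naturality := by
        intro x y f
        dsimp
        simp only [Category.assoc]
        rw [← transNat ρ Φ θ x.el y.el (α.app y),
          ← Functor.map_comp_assoc, ← Φ.map_comp, α.naturality (Chaotic.hom x y), Φ.map_comp,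
          Functor.map_comp_assoc] }
  map_id := by intro F; ext x; simp
  map_comp := by intro F F' F'' α β; ext x; simp

/-- Evaluation at `⟨1⟩` is an equivalence. -/
def evalOne (X : Type*) [Category X] : (Chaotic G ⥤ X) ≌ X where
  functor := (evaluation (Chaotic G) X).obj ⟨(1 : G)⟩
  inverse := Functor.const (Chaotic G)
  unitIso := NatIso.ofComponents (fun F =>
    NatIso.ofComponents (fun x =>
      ⟨F.map PUnit.unit, F.map PUnit.unit, by rw [← F.map_comp]; exact F.map_id x,
        by rw [← F.map_comp]; exact F.map_id _⟩)
      (by intro x y f; dsimp; rw [← F.map_comp, Category.comp_id]; rfl))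
    (by intro F F' α; ext x; exact (α.naturality _).symm)
  counitIso := NatIso.ofComponents (fun c => Iso.refl c) (by intros; simp)
  functor_unitIso_comp := by
    intro F; dsimp; rw [Category.comp_id]; exact F.map_id _

theorem induced_functor_on_homotopy_fixed_data_compatible_with_Phi
    (ρ : G → D ⥤ D)
    (hone : ρ 1 = 𝟭 D)
    (hmul : ∀ g h : G, ρ (g * h) = ρ h ⋙ ρ g)
    (Φ : C ⥤ D)
    (θ : ∀ g : G, Φ ≅ Φ ⋙ ρ g)
    (hθone : ∀ c : C, (θ 1).hom.app c = eqToHom (by rw [hone]; rfl))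
    (hcocycle : ∀ (g h : G) (c : C),
      (θ g).hom.app c ≫ (ρ g).map ((θ h).hom.app c) =
        (θ (g * h)).hom.app c ≫ eqToHom (by rw [hmul g h]; rfl)) :
    ∃ Φt : (Chaotic G ⥤ C) ⥤ (Chaotic G ⥤ D),
      -- `Φ~` is strictly `G`-equivariant
      (∀ g : G, conjTrivial C g ⋙ Φt = Φt ⋙ conjAction ρ g) ∧
      -- the square relating `Φ~` and `Φ` commutes up to natural isomorphism:
      -- (constant embedding) ⋙ Φ~ ⋙ (evaluation at e) ≅ Φ
      Nonempty ((Functor.const (Chaotic G) ⋙ Φt ⋙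
        (evaluation (Chaotic G) D).obj ⟨(1 : G)⟩) ≅ Φ) ∧
      -- `Φ~` is an equivalence whenever `Φ` is
      (Φ.IsEquivalence → Φt.IsEquivalence) := by
  refine ⟨PhiT ρ Φ θ, ?_, ?_, ?_⟩
  · -- strict equivariance
    intro g
    have key : ∀ x : G, ρ x = ρ (g⁻¹ * x) ⋙ ρ g := by
      intro x; rw [← hmul, mul_inv_cancel_left]
    have cocHom : ∀ (h : G) (c : C), (ρ g).map ((θ h).hom.app c) =
        (θ g).inv.app c ≫ (θ (g * h)).hom.app c ≫ eqToHom (by rw [hmul]; rfl) := by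
      intro h c
      have hc := hcocycle g h c
      rw [← hc]
      simp
    have cocInv : ∀ (h : G) (c : C), (ρ g).map ((θ h).inv.app c) =
        eqToHom (by rw [hmul]; rfl) ≫ (θ (g * h)).inv.app c ≫ (θ g).hom.app c := by
      intro h c
      rw [← cancel_mono ((ρ g).map ((θ h).hom.app c)), ← Functor.map_comp]
      simp [cocHom]
    have hobjF : ∀ F : Chaotic G ⥤ C,
        (conjTrivial.{w, v₁, u₁, u_1, u_1} C g ⋙ PhiT.{w, v₁, u₁, v₂, u₂, u_1, u_2} ρ Φ θ).obj F = (PhiT ρ Φ θ ⋙ conjAction ρ g).obj F := by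
      intro F
      refine CategoryTheory.Functor.ext (fun x => Functor.congr_obj (key x.el) _) ?_
      intro x y f
      dsimp [conjTrivial, conjAction, PhiT, Chaotic.trans, Chaotic.hom]
      rw [Functor.map_comp, Functor.map_comp, cocInv, cocHom,
        Functor.congr_hom (key x.el),
        thetaInv_congr ρ Φ θ (mul_inv_cancel_left g x.el),
        thetaHom_congr ρ Φ θ (mul_inv_cancel_left g y.el)]
      simp [Functor.comp_map, eqToHom_trans, Category.assoc]
      erw [eqToHom_trans, eqToHom_refl, Category.comp_id]
    refine CategoryTheory.Functor.ext hobjF ?_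
    intro F F' α
    ext x
    simp only [NatTrans.comp_app, eqToHom_app]
    dsimp [conjTrivial, conjAction, PhiT, Chaotic.trans]
    rw [Functor.congr_hom (key x.el)]
    simp [Functor.comp_map, eqToHom_trans]
  · -- compatibility with Φ
    refine ⟨NatIso.ofComponents (fun c => ((θ 1).app c).symm) ?_⟩
    intro c c' m
    dsimp [PhiT]
    exact (θ 1).inv.naturality m
  · -- equivalence
    intro hΦ
    have e : (PhiT ρ Φ θ ⋙ (evalOne (G := G) D).functor) ≅ (evalOne (G := G) C).functor ⋙ Φ :=
      NatIso.ofComponents (fun F => ((θ 1).app (F.obj ⟨1⟩)).symm)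
        (fun {F F'} α => (θ 1).inv.naturality (α.app ⟨1⟩))
    have h1 : (PhiT ρ Φ θ ⋙ (evalOne (G := G) D).functor).IsEquivalence := by
      rw [Functor.isEquivalence_iff_of_iso e]
      infer_instance
    exact Functor.isEquivalence_of_comp_right _ (evalOne (G := G) D).functor
end
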